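/- Let g : {0,1}^m → {0,1} depend on all m coordinates and suppose g is not of the form x ↦ (⊕_{i=1}^m x_i) ⊕ b for any b ∈ {0,1}. Then there exist a permutation of the coordinates and a vector α ∈ {0,1}^{m-1} such that g(α_1,…,α_{m-1},0) = g(α_1,…,α_{m-1},1). -/

import Mathlib

/-- If `g : {0,1}^m → {0,1}` depends on all coordinates and is not of the
form `x ↦ (⊕ᵢ xᵢ) ⊕ b`, then (after a suitable reordering of coordinates) there is a
point `α` at which some coordinate is non-sensitive, i.e. there exist a coordinate `j`
and `α` with `g(α[j ↦ 0]) = g(α[j ↦ 1])`. -/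
theorem exists_nonsensitive_coordinate {m : ℕ} (g : (Fin m → Bool) → Bool)
    (hdep : ∀ j : Fin m, ∃ x : Fin m → Bool, g x ≠ g (Function.update x j (!(x j))))
    (hxor : ¬ ∃ b : Bool, ∀ x : Fin m → Bool,
      g x = xor b (decide ((Finset.univ.filter fun i => x i = true).card % 2 = 1))) :
    ∃ (j : Fin m) (α : Fin m → Bool),
      g (Function.update α j false) = g (Function.update α j true) := by
  by_contra hc
  push_neg at hc
  apply hxor
  refine ⟨g (fun _ => false), ?_⟩
  set b := g (fun _ => false) with hb
  suffices H : ∀ n : ℕ, ∀ x : Fin m → Bool,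
      (Finset.univ.filter fun i => x i = true).card = n →
      g x = xor b (decide (n % 2 = 1)) by
    intro x
    rw [H _ x rfl]
  intro n
  induction n with
  | zero =>
    intro x hx
    have hx0 : x = fun _ => false := by
      funext i
      by_contra hi
      have hmem : i ∈ Finset.univ.filter fun i => x i = true := by
        simp only [Bool.not_eq_false] at hi
        simp [hi]
      rw [Finset.card_eq_zero] at hx
      simp [hx] at hmem
    subst hx0
    simp
    exact hb.symm
  | succ n ih =>
    intro x hx
    have hne : (Finset.univ.filter fun i => x i = true).Nonempty := by
      rw [← Finset.card_pos, hx]; omega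
    obtain ⟨j, hj⟩ := hne
    simp only [Finset.mem_filter] at hj
    have hxj : x j = true := hj.2
    set y := Function.update x j false with hy
    have hcard : (Finset.univ.filter fun i => y i = true).card = n := by
      have heq : (Finset.univ.filter fun i => y i = true) =
          (Finset.univ.filter fun i => x i = true).erase j := by
        ext i
        by_cases hij : i = j <;> simp [hy, Function.update, hij, hxj]
      rw [heq, Finset.card_erase_of_mem (by simp [hxj]), hx]; omega
    have hgy := ih y hcard
    have hsens := hc j y
    have hx_eq : Function.update y j true = x := by
      funext i
      by_cases hij : i = j <;> simp [hy, Function.update, hij, hxj]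
    have hy_eq : Function.update y j false = y := by
      funext i
      by_cases hij : i = j <;> simp [hy, Function.update, hij]
    rw [hy_eq, hx_eq] at hsens
    have hgx : g x = !(g y) := by
      cases h1 : g y <;> cases h2 : g x <;> simp_all
    rw [hgx, hgy]
    rcases Nat.mod_two_eq_zero_or_one n with h | h
    · have h1 : (n + 1) % 2 = 1 := by omega
      simp [h, h1]
    · have h1 : (n + 1) % 2 = 0 := by omega
      simp [h, h1]
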